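/- For all real x with 0 < x < π/2, 2 + (8/45 − (8/945)x^2 + (16/14175)x^4)·x^3·tan x < (sin x/x)^2 + (tan x)/x < 2 + (8/45 − (8/945)x^2 + b·x^4)·x^3·tan x, where b = (241920 − 2688π^4 + 32π^6)/(945π^8). -/

import Mathlib

open Real Set

private lemma aux_nonneg {f f' : ℝ → ℝ} (hd : ∀ t, HasDerivAt f (f' t) t) (h0 : f 0 = 0)
    (h' : ∀ t, 0 ≤ t → 0 ≤ f' t) {x : ℝ} (hx : 0 ≤ x) : 0 ≤ f x := by
  have hdiff : Differentiable ℝ f := fun t => (hd t).differentiableAt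
  have hmono : MonotoneOn f (Ici (0:ℝ)) := by
    apply monotoneOn_of_deriv_nonneg (convex_Ici 0) hdiff.continuous.continuousOn
      (fun t _ => (hdiff t).differentiableWithinAt)
    intro t ht
    rw [(hd t).deriv]
    exact h' t (le_of_lt (by simpa using ht))
  have := hmono (show (0:ℝ) ∈ Ici 0 by simp) (show x ∈ Ici 0 from hx) hx
  rw [h0] at this; exact this

private lemma tb_c2 (x : ℝ) (hx : 0 ≤ x) : 1 - x^2/2 ≤ Real.cos x := by
  have key : 0 ≤ Real.cos x - (1 - x^2/2) := by
    apply aux_nonneg (f := fun t => Real.cos t - (1 - t^2/2)) (f' := fun t => (t) - Real.sin t) (hx := hx)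
    · intro t
      have h1 := (Real.hasDerivAt_cos t).sub ((hasDerivAt_const t (1:ℝ)).sub ((hasDerivAt_pow 2 t).div_const 2))
      refine h1.congr_deriv ?_
      push_cast; ring
    · norm_num
    · intro t ht
      show 0 ≤ (t) - Real.sin t
      have hp := Real.sin_le ht
      linarith
  linarith

private lemma tb_s3 (x : ℝ) (hx : 0 ≤ x) : x - x^3/6 ≤ Real.sin x := by
  have key : 0 ≤ Real.sin x - (x - x^3/6) := by
    apply aux_nonneg (f := fun t => Real.sin t - (t - t^3/6)) (f' := fun t => Real.cos t - (1 - t^2/2)) (hx := hx)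
    · intro t
      have h1 := (Real.hasDerivAt_sin t).sub ((hasDerivAt_id t).sub ((hasDerivAt_pow 3 t).div_const 6))
      refine h1.congr_deriv ?_
      push_cast; ring
    · norm_num
    · intro t ht
      show 0 ≤ Real.cos t - (1 - t^2/2)
      have hp := tb_c2 t ht
      linarith
  linarith

private lemma tb_c4 (x : ℝ) (hx : 0 ≤ x) : Real.cos x ≤ 1 - x^2/2 + x^4/24 := by
  have key : 0 ≤ (1 - x^2/2 + x^4/24) - Real.cos x := by
    apply aux_nonneg (f := fun t => (1 - t^2/2 + t^4/24) - Real.cos t) (f' := fun t => Real.sin t - (t - t^3/6)) (hx := hx)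
    · intro t
      have h1 := (((hasDerivAt_const t (1:ℝ)).sub ((hasDerivAt_pow 2 t).div_const 2)).add ((hasDerivAt_pow 4 t).div_const 24)).sub (Real.hasDerivAt_cos t)
      refine h1.congr_deriv ?_
      push_cast; ring
    · norm_num
    · intro t ht
      show 0 ≤ Real.sin t - (t - t^3/6)
      have hp := tb_s3 t ht
      linarith
  linarith

private lemma tb_s5 (x : ℝ) (hx : 0 ≤ x) : Real.sin x ≤ x - x^3/6 + x^5/120 := by
  have key : 0 ≤ (x - x^3/6 + x^5/120) - Real.sin x := by
    apply aux_nonneg (f := fun t => (t - t^3/6 + t^5/120) - Real.sin t) (f' := fun t => (1 - t^2/2 + t^4/24) - Real.cos t) (hx := hx)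
    · intro t
      have h1 := (((hasDerivAt_id t).sub ((hasDerivAt_pow 3 t).div_const 6)).add ((hasDerivAt_pow 5 t).div_const 120)).sub (Real.hasDerivAt_sin t)
      refine h1.congr_deriv ?_
      push_cast; ring
    · norm_num
    · intro t ht
      show 0 ≤ (1 - t^2/2 + t^4/24) - Real.cos t
      have hp := tb_c4 t ht
      linarith
  linarith

private lemma tb_c6 (x : ℝ) (hx : 0 ≤ x) : 1 - x^2/2 + x^4/24 - x^6/720 ≤ Real.cos x := by
  have key : 0 ≤ Real.cos x - (1 - x^2/2 + x^4/24 - x^6/720) := by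
    apply aux_nonneg (f := fun t => Real.cos t - (1 - t^2/2 + t^4/24 - t^6/720)) (f' := fun t => (t - t^3/6 + t^5/120) - Real.sin t) (hx := hx)
    · intro t
      have h1 := (Real.hasDerivAt_cos t).sub ((((hasDerivAt_const t (1:ℝ)).sub ((hasDerivAt_pow 2 t).div_const 2)).add ((hasDerivAt_pow 4 t).div_const 24)).sub ((hasDerivAt_pow 6 t).div_const 720))
      refine h1.congr_deriv ?_
      push_cast; ring
    · norm_num
    · intro t ht
      show 0 ≤ (t - t^3/6 + t^5/120) - Real.sin t
      have hp := tb_s5 t ht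
      linarith
  linarith

private lemma tb_s7 (x : ℝ) (hx : 0 ≤ x) : x - x^3/6 + x^5/120 - x^7/5040 ≤ Real.sin x := by
  have key : 0 ≤ Real.sin x - (x - x^3/6 + x^5/120 - x^7/5040) := by
    apply aux_nonneg (f := fun t => Real.sin t - (t - t^3/6 + t^5/120 - t^7/5040)) (f' := fun t => Real.cos t - (1 - t^2/2 + t^4/24 - t^6/720)) (hx := hx)
    · intro t
      have h1 := (Real.hasDerivAt_sin t).sub ((((hasDerivAt_id t).sub ((hasDerivAt_pow 3 t).div_const 6)).add ((hasDerivAt_pow 5 t).div_const 120)).sub ((hasDerivAt_pow 7 t).div_const 5040))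
      refine h1.congr_deriv ?_
      push_cast; ring
    · norm_num
    · intro t ht
      show 0 ≤ Real.cos t - (1 - t^2/2 + t^4/24 - t^6/720)
      have hp := tb_c6 t ht
      linarith
  linarith

private lemma tb_c8 (x : ℝ) (hx : 0 ≤ x) : Real.cos x ≤ 1 - x^2/2 + x^4/24 - x^6/720 + x^8/40320 := by
  have key : 0 ≤ (1 - x^2/2 + x^4/24 - x^6/720 + x^8/40320) - Real.cos x := by
    apply aux_nonneg (f := fun t => (1 - t^2/2 + t^4/24 - t^6/720 + t^8/40320) - Real.cos t) (f' := fun t => Real.sin t - (t - t^3/6 + t^5/120 - t^7/5040)) (hx := hx)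
    · intro t
      have h1 := (((((hasDerivAt_const t (1:ℝ)).sub ((hasDerivAt_pow 2 t).div_const 2)).add ((hasDerivAt_pow 4 t).div_const 24)).sub ((hasDerivAt_pow 6 t).div_const 720)).add ((hasDerivAt_pow 8 t).div_const 40320)).sub (Real.hasDerivAt_cos t)
      refine h1.congr_deriv ?_
      push_cast; ring
    · norm_num
    · intro t ht
      show 0 ≤ Real.sin t - (t - t^3/6 + t^5/120 - t^7/5040)
      have hp := tb_s7 t ht
      linarith
  linarith

private lemma tb_s9 (x : ℝ) (hx : 0 ≤ x) : Real.sin x ≤ x - x^3/6 + x^5/120 - x^7/5040 + x^9/362880 := by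
  have key : 0 ≤ (x - x^3/6 + x^5/120 - x^7/5040 + x^9/362880) - Real.sin x := by
    apply aux_nonneg (f := fun t => (t - t^3/6 + t^5/120 - t^7/5040 + t^9/362880) - Real.sin t) (f' := fun t => (1 - t^2/2 + t^4/24 - t^6/720 + t^8/40320) - Real.cos t) (hx := hx)
    · intro t
      have h1 := (((((hasDerivAt_id t).sub ((hasDerivAt_pow 3 t).div_const 6)).add ((hasDerivAt_pow 5 t).div_const 120)).sub ((hasDerivAt_pow 7 t).div_const 5040)).add ((hasDerivAt_pow 9 t).div_const 362880)).sub (Real.hasDerivAt_sin t)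
      refine h1.congr_deriv ?_
      push_cast; ring
    · norm_num
    · intro t ht
      show 0 ≤ (1 - t^2/2 + t^4/24 - t^6/720 + t^8/40320) - Real.cos t
      have hp := tb_c8 t ht
      linarith
  linarith

private lemma tb_c10 (x : ℝ) (hx : 0 ≤ x) : 1 - x^2/2 + x^4/24 - x^6/720 + x^8/40320 - x^10/3628800 ≤ Real.cos x := by
  have key : 0 ≤ Real.cos x - (1 - x^2/2 + x^4/24 - x^6/720 + x^8/40320 - x^10/3628800) := by
    apply aux_nonneg (f := fun t => Real.cos t - (1 - t^2/2 + t^4/24 - t^6/720 + t^8/40320 - t^10/3628800)) (f' := fun t => (t - t^3/6 + t^5/120 - t^7/5040 + t^9/362880) - Real.sin t) (hx := hx)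
    · intro t
      have h1 := (Real.hasDerivAt_cos t).sub ((((((hasDerivAt_const t (1:ℝ)).sub ((hasDerivAt_pow 2 t).div_const 2)).add ((hasDerivAt_pow 4 t).div_const 24)).sub ((hasDerivAt_pow 6 t).div_const 720)).add ((hasDerivAt_pow 8 t).div_const 40320)).sub ((hasDerivAt_pow 10 t).div_const 3628800))
      refine h1.congr_deriv ?_
      push_cast; ring
    · norm_num
    · intro t ht
      show 0 ≤ (t - t^3/6 + t^5/120 - t^7/5040 + t^9/362880) - Real.sin t
      have hp := tb_s9 t ht
      linarith
  linarith

private lemma tb_s11 (x : ℝ) (hx : 0 ≤ x) : x - x^3/6 + x^5/120 - x^7/5040 + x^9/362880 - x^11/39916800 ≤ Real.sin x := by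
  have key : 0 ≤ Real.sin x - (x - x^3/6 + x^5/120 - x^7/5040 + x^9/362880 - x^11/39916800) := by
    apply aux_nonneg (f := fun t => Real.sin t - (t - t^3/6 + t^5/120 - t^7/5040 + t^9/362880 - t^11/39916800)) (f' := fun t => Real.cos t - (1 - t^2/2 + t^4/24 - t^6/720 + t^8/40320 - t^10/3628800)) (hx := hx)
    · intro t
      have h1 := (Real.hasDerivAt_sin t).sub ((((((hasDerivAt_id t).sub ((hasDerivAt_pow 3 t).div_const 6)).add ((hasDerivAt_pow 5 t).div_const 120)).sub ((hasDerivAt_pow 7 t).div_const 5040)).add ((hasDerivAt_pow 9 t).div_const 362880)).sub ((hasDerivAt_pow 11 t).div_const 39916800))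
      refine h1.congr_deriv ?_
      push_cast; ring
    · norm_num
    · intro t ht
      show 0 ≤ Real.cos t - (1 - t^2/2 + t^4/24 - t^6/720 + t^8/40320 - t^10/3628800)
      have hp := tb_c10 t ht
      linarith
  linarith

private lemma tb_c12 (x : ℝ) (hx : 0 ≤ x) : Real.cos x ≤ 1 - x^2/2 + x^4/24 - x^6/720 + x^8/40320 - x^10/3628800 + x^12/479001600 := by
  have key : 0 ≤ (1 - x^2/2 + x^4/24 - x^6/720 + x^8/40320 - x^10/3628800 + x^12/479001600) - Real.cos x := by
    apply aux_nonneg (f := fun t => (1 - t^2/2 + t^4/24 - t^6/720 + t^8/40320 - t^10/3628800 + t^12/479001600) - Real.cos t) (f' := fun t => Real.sin t - (t - t^3/6 + t^5/120 - t^7/5040 + t^9/362880 - t^11/39916800)) (hx := hx)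
    · intro t
      have h1 := (((((((hasDerivAt_const t (1:ℝ)).sub ((hasDerivAt_pow 2 t).div_const 2)).add ((hasDerivAt_pow 4 t).div_const 24)).sub ((hasDerivAt_pow 6 t).div_const 720)).add ((hasDerivAt_pow 8 t).div_const 40320)).sub ((hasDerivAt_pow 10 t).div_const 3628800)).add ((hasDerivAt_pow 12 t).div_const 479001600)).sub (Real.hasDerivAt_cos t)
      refine h1.congr_deriv ?_
      push_cast; ring
    · norm_num
    · intro t ht
      show 0 ≤ Real.sin t - (t - t^3/6 + t^5/120 - t^7/5040 + t^9/362880 - t^11/39916800)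
      have hp := tb_s11 t ht
      linarith
  linarith

private lemma RF_pos (y : ℝ) (h0 : 0 ≤ y) (h1 : y ≤ 2467402/1000000) :
    (0:ℝ) < (8191/479001600) + (13429/6286896000)*y + (-644657/2414168064000)*y^2 + (34781/2897001676800)*y^3 + (-703/1970749440000)*y^4 + (3977/579400335360000)*y^5 + (-116141/1070731819745280000)*y^6 + (5021/3569106065817600000)*y^7 + (-1907/128487818369433600000)*y^8 + (103/825993118089216000000)*y^9 + (-37/46255614612996096000000)*y^10 + (1/277533687677976576000000)*y^11 + (-1/109903340320478724096000000)*y^12 := by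
  nlinarith [pow_le_pow_left₀ h0 h1 2, pow_le_pow_left₀ h0 h1 4, pow_le_pow_left₀ h0 h1 6, pow_le_pow_left₀ h0 h1 8, pow_le_pow_left₀ h0 h1 10, pow_le_pow_left₀ h0 h1 12, pow_nonneg h0 1, pow_nonneg h0 3, pow_nonneg h0 5, pow_nonneg h0 7, pow_nonneg h0 9, pow_nonneg h0 11]

private lemma RD_pos (y : ℝ) (h0 : 0 ≤ y) (h1 : y ≤ 5329/2500) :
    (0:ℝ) < (459973673/5670000000000) + (-11471429153/374220000000000)*y + (-9277059289/4762800000000000)*y^2 + (2666718857/10716300000000000)*y^3 + (-2171/146313216000)*y^4 + (2957/8778792960000)*y^5 + (-1/167215104000)*y^6 + (241/2949674434560000)*y^7 + (-73/88490233036800000)*y^8 + (1/176980466073600000)*y^9 + (-1/47784725839872000000)*y^10 := by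
  nlinarith [pow_le_pow_left₀ h0 h1 1, pow_le_pow_left₀ h0 h1 2, pow_le_pow_left₀ h0 h1 4, pow_le_pow_left₀ h0 h1 6, pow_le_pow_left₀ h0 h1 8, pow_le_pow_left₀ h0 h1 10, pow_nonneg h0 3, pow_nonneg h0 5, pow_nonneg h0 7, pow_nonneg h0 9]

private lemma PDp_neg (t : ℝ) (h0 : 0 ≤ t) (h1 : t ≤ 111/1000) :
    (2301799/2835000000)*(73/50 + t)^9 + (-57319789/155925000000)*(73/50 + t)^11 + (-1134253181/56133000000000)*(73/50 + t)^13 + (416831537/107163000000000)*(73/50 + t)^15 + (-3726665633/18860688000000000)*(73/50 + t)^17 + (69157439/11430720000000000)*(73/50 + t)^19 + (-1207383323/10561985280000000000)*(73/50 + t)^21 + (19/12290310144000)*(73/50 + t)^23 + (-1/73741860864000)*(73/50 + t)^25 + (1/15928241946624000)*(73/50 + t)^27 < 0 := by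
  nlinarith [pow_le_pow_left₀ h0 h1 9, pow_le_pow_left₀ h0 h1 10, pow_le_pow_left₀ h0 h1 11, pow_le_pow_left₀ h0 h1 12, pow_le_pow_left₀ h0 h1 15, pow_le_pow_left₀ h0 h1 16, pow_le_pow_left₀ h0 h1 17, pow_le_pow_left₀ h0 h1 20, pow_le_pow_left₀ h0 h1 21, pow_le_pow_left₀ h0 h1 24, pow_le_pow_left₀ h0 h1 25, pow_le_pow_left₀ h0 h1 26, pow_le_pow_left₀ h0 h1 27, pow_nonneg h0 1, pow_nonneg h0 2, pow_nonneg h0 3, pow_nonneg h0 4, pow_nonneg h0 5, pow_nonneg h0 6, pow_nonneg h0 7, pow_nonneg h0 8, pow_nonneg h0 13, pow_nonneg h0 14, pow_nonneg h0 18, pow_nonneg h0 19, pow_nonneg h0 22, pow_nonneg h0 23]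

noncomputable def DD (B : ℝ) : ℝ → ℝ := fun u =>
  Real.cos u * (2*u^2 - Real.sin u^2) + Real.sin u * (B*u^9 + 8/45*u^5 - 8/945*u^7 - u)

noncomputable def DD' (B : ℝ) (t : ℝ) : ℝ :=
  -Real.sin t * (2*t^2 - Real.sin t^2) + Real.cos t * (4*t - 2*Real.sin t*Real.cos t) +
  (Real.cos t * (B*t^9 + 8/45*t^5 - 8/945*t^7 - t) +
   Real.sin t * (9*B*t^8 + 8/9*t^4 - 8/135*t^6 - 1))

private lemma DD_hasDeriv (B t : ℝ) : HasDerivAt (DD B) (DD' B t) t := by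
  have h1 : HasDerivAt (fun u : ℝ => 2*u^2 - Real.sin u^2) (4*t - 2*Real.sin t*Real.cos t) t := by
    have h := ((hasDerivAt_pow 2 t).const_mul (2:ℝ)).sub ((Real.hasDerivAt_sin t).pow 2)
    refine h.congr_deriv ?_
    push_cast; ring
  have h2 : HasDerivAt (fun u : ℝ => B*u^9 + 8/45*u^5 - 8/945*u^7 - u)
      (9*B*t^8 + 8/9*t^4 - 8/135*t^6 - 1) t := by
    have h := ((((hasDerivAt_pow 9 t).const_mul B).add ((hasDerivAt_pow 5 t).const_mul
      ((8:ℝ)/45))).sub ((hasDerivAt_pow 7 t).const_mul ((8:ℝ)/945))).sub (hasDerivAt_id t)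
    refine h.congr_deriv ?_
    push_cast; ring
  have h3 := ((Real.hasDerivAt_cos t).mul h1).add ((Real.hasDerivAt_sin t).mul h2)
  unfold DD DD'
  refine h3.congr_deriv ?_
  all_goals ring

private lemma pi_sq_bounds : ((986960029/100000000):ℝ) < π^2 ∧ π^2 < ((493480329/50000000):ℝ) := by
  have h1 := Real.pi_gt_d6
  have h2 := Real.pi_lt_d6
  constructor <;> nlinarith [Real.pi_pos]

private lemma pi_pow_bounds : ((2435225247/25000000):ℝ) < π^4 ∧ π^4 < ((1948182681/20000000):ℝ) ∧
    ((6008674951/6250000):ℝ) < π^6 ∧ π^6 < ((48069491519/50000000):ℝ) ∧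
    ((47442576029/5000000):ℝ) < π^8 ∧ π^8 < ((474426969819/50000000):ℝ) := by
  obtain ⟨h2l, h2u⟩ := pi_sq_bounds
  have hsq : 0 ≤ π^2 := sq_nonneg π
  have h4l : ((2435225247/25000000):ℝ) < π^4 := by nlinarith
  have h4u : π^4 < ((1948182681/20000000):ℝ) := by nlinarith
  have h6l : ((6008674951/6250000):ℝ) < π^6 := by nlinarith
  have h6u : π^6 < ((48069491519/50000000):ℝ) := by nlinarith
  refine ⟨h4l, h4u, h6l, h6u, by nlinarith, by nlinarith⟩

private lemma b_lo_bound : (12098719:ℝ)/10^10 ≤ ((241920 - 2688 * π ^ 4 + 32 * π ^ 6) / (945 * π ^ 8)) := by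
  obtain ⟨h4l, h4u, h6l, h6u, h8l, h8u⟩ := pi_pow_bounds
  rw [le_div_iff₀ (by positivity)]
  nlinarith

private lemma b_up_bound : ((241920 - 2688 * π ^ 4 + 32 * π ^ 6) / (945 * π ^ 8)) ≤ (12099400:ℝ)/10^10 := by
  obtain ⟨h4l, h4u, h6l, h6u, h8l, h8u⟩ := pi_pow_bounds
  rw [div_le_iff₀ (by positivity)]
  nlinarith

private lemma DD_pi2 : DD ((241920 - 2688 * π ^ 4 + 32 * π ^ 6) / (945 * π ^ 8)) (π/2) = 0 := by
  have hpi := Real.pi_ne_zero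
  unfold DD
  rw [Real.cos_pi_div_two, Real.sin_pi_div_two]
  field_simp
  ring

set_option maxHeartbeats 2000000 in
private lemma F_pos (x : ℝ) (hx0 : 0 < x) (hx2 : x < π/2) :
    2*x^2*Real.cos x + (8/45*x^5 - 8/945*x^7 + 16/14175*x^9)*Real.sin x <
      Real.sin x^2*Real.cos x + x*Real.sin x := by
  have hpipos := Real.pi_pos
  have h157 : x ≤ (15707965:ℝ)/10^7 := by
    have := Real.pi_lt_d6; linarith
  have hs0 : 0 ≤ Real.sin x := Real.sin_nonneg_of_nonneg_of_le_pi hx0.le (by linarith)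
  have hc0 : 0 ≤ Real.cos x := Real.cos_nonneg_of_mem_Icc ⟨by linarith, hx2.le⟩
  have hs11 := tb_s11 x hx0.le
  have hs9 := tb_s9 x hx0.le
  have hc10 := tb_c10 x hx0.le
  have hc12 := tb_c12 x hx0.le
  have hsq : Real.sin x^2*Real.cos x = Real.cos x - Real.cos x^3 := by
    rw [Real.sin_sq]; ring
  have hcube : Real.cos x^3 ≤ (1 - x^2/2 + x^4/24 - x^6/720 + x^8/40320 - x^10/3628800 + x^12/479001600)^3 := pow_le_pow_left₀ hc0 hc12 3
  have h2x2 : 2*x^2*Real.cos x ≤ 2*x^2*(1 - x^2/2 + x^4/24 - x^6/720 + x^8/40320 - x^10/3628800 + x^12/479001600) := mul_le_mul_of_nonneg_left hc12 (by positivity)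
  have hxs : x*(x - x^3/6 + x^5/120 - x^7/5040 + x^9/362880 - x^11/39916800) ≤ x*Real.sin x := mul_le_mul_of_nonneg_left hs11 hx0.le
  have hp0 : 0 ≤ 8/45*x^5 - 8/945*x^7 + 16/14175*x^9 := by
    nlinarith [mul_nonneg (pow_nonneg hx0.le 5) (sq_nonneg (x^2 - 15/4)), pow_nonneg hx0.le 5]
  have hps : (8/45*x^5 - 8/945*x^7 + 16/14175*x^9)*Real.sin x ≤
      (8/45*x^5 - 8/945*x^7 + 16/14175*x^9)*(x - x^3/6 + x^5/120 - x^7/5040 + x^9/362880) := mul_le_mul_of_nonneg_left hs9 hp0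
  have hy1 : x^2 ≤ 2467402/1000000 := by
    nlinarith [mul_le_mul h157 h157 hx0.le (by norm_num : (0:ℝ) ≤ 15707965/10^7)]
  have hR := RF_pos (x^2) (by positivity) hy1
  linarith [hsq, hcube, h2x2, hxs, hps, hc10, mul_pos (pow_pos hx0 12) hR]

set_option maxHeartbeats 2000000 in
private lemma DD_posA (B : ℝ) (hBlo : (12098719:ℝ)/10^10 ≤ B) (x : ℝ)
    (hx0 : 0 < x) (hx1 : x ≤ 73/50) : 0 < DD B x := by
  have hpipos := Real.pi_pos
  have hpigt := Real.pi_gt_d6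
  have hs0 : 0 ≤ Real.sin x := Real.sin_nonneg_of_nonneg_of_le_pi hx0.le (by linarith)
  have hc0 : 0 ≤ Real.cos x := Real.cos_nonneg_of_mem_Icc ⟨by linarith, by linarith⟩
  have hs7 := tb_s7 x hx0.le
  have hs9 := tb_s9 x hx0.le
  have hc10 := tb_c10 x hx0.le
  have hc12 := tb_c12 x hx0.le
  have hsq : Real.sin x^2*Real.cos x = Real.cos x - Real.cos x^3 := by
    rw [Real.sin_sq]; ring
  have hcube : (1 - x^2/2 + x^4/24 - x^6/720 + x^8/40320 - x^10/3628800)^3 ≤ Real.cos x^3 := by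
    nlinarith [hc10, sq_nonneg (Real.cos x + (1 - x^2/2 + x^4/24 - x^6/720 + x^8/40320 - x^10/3628800)), sq_nonneg (Real.cos x - (1 - x^2/2 + x^4/24 - x^6/720 + x^8/40320 - x^10/3628800)),
      sq_nonneg (1 - x^2/2 + x^4/24 - x^6/720 + x^8/40320 - x^10/3628800), sq_nonneg (Real.cos x)]
  have h2x2 : 2*x^2*(1 - x^2/2 + x^4/24 - x^6/720 + x^8/40320 - x^10/3628800) ≤ 2*x^2*Real.cos x := mul_le_mul_of_nonneg_left hc10 (by positivity)
  have hb9a : (x - x^3/6 + x^5/120 - x^7/5040)*((12098719:ℝ)/10^10*x^9) ≤ Real.sin x*((12098719:ℝ)/10^10*x^9) :=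
    mul_le_mul_of_nonneg_right hs7 (by positivity)
  have hb9b : Real.sin x*((12098719:ℝ)/10^10*x^9) ≤ Real.sin x*(B*x^9) :=
    mul_le_mul_of_nonneg_left (mul_le_mul_of_nonneg_right hBlo (pow_nonneg hx0.le 9)) hs0
  have hs5 : (x - x^3/6 + x^5/120 - x^7/5040)*(8/45*x^5) ≤ Real.sin x*(8/45*x^5) :=
    mul_le_mul_of_nonneg_right hs7 (by positivity)
  have hneg : Real.sin x*(8/945*x^7 + x) ≤ (x - x^3/6 + x^5/120 - x^7/5040 + x^9/362880)*(8/945*x^7 + x) :=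
    mul_le_mul_of_nonneg_right hs9 (by positivity)
  have hy1 : x^2 ≤ 5329/2500 := by
    nlinarith [mul_le_mul hx1 hx1 hx0.le (by norm_num : (0:ℝ) ≤ 73/50)]
  have hR := RD_pos (x^2) (by positivity) hy1
  unfold DD
  linarith [hsq, hc12, hcube, h2x2, hb9a, hb9b, hs5, hneg, mul_pos (pow_pos hx0 10) hR]

set_option maxHeartbeats 2000000 in
private lemma DD'_neg (B : ℝ) (hBlo : (12098719:ℝ)/10^10 ≤ B) (hBup : B ≤ (12099400:ℝ)/10^10)
    (t : ℝ) (h1 : 73/50 ≤ t) (h2 : t ≤ π/2) : DD' B t < 0 := by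
  have hpipos := Real.pi_pos
  have ht0 : (0:ℝ) < t := by linarith
  have h157 : t ≤ (15707965:ℝ)/10^7 := by
    have := Real.pi_lt_d6; linarith
  have hs0 : 0 ≤ Real.sin t := Real.sin_nonneg_of_nonneg_of_le_pi ht0.le (by linarith)
  have hc0 : 0 ≤ Real.cos t := Real.cos_nonneg_of_mem_Icc ⟨by linarith, h2⟩
  have hs9 := tb_s9 t ht0.le
  have hs11 := tb_s11 t ht0.le
  have hc10 := tb_c10 t ht0.le
  have hc12 := tb_c12 t ht0.le
  have hK12nn : (0:ℝ) ≤ (1 - t^2/2 + t^4/24 - t^6/720 + t^8/40320 - t^10/3628800 + t^12/479001600) := le_trans hc0 hc12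
  have hS9nn : (0:ℝ) ≤ (t - t^3/6 + t^5/120 - t^7/5040 + t^9/362880) := le_trans hs0 hs9
  have hsq2 : Real.sin t*Real.cos t^2 = Real.sin t - Real.sin t^3 := by
    rw [Real.cos_sq']; ring
  have hs93 : Real.sin t^3 ≤ (t - t^3/6 + t^5/120 - t^7/5040 + t^9/362880)^3 := pow_le_pow_left₀ hs0 hs9 3
  have a1 : 2*t^2*(t - t^3/6 + t^5/120 - t^7/5040 + t^9/362880 - t^11/39916800) ≤ 2*t^2*Real.sin t := mul_le_mul_of_nonneg_left hs11 (by positivity)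
  have a3 : 4*t*Real.cos t ≤ 4*t*(1 - t^2/2 + t^4/24 - t^6/720 + t^8/40320 - t^10/3628800 + t^12/479001600) := mul_le_mul_of_nonneg_left hc12 (by positivity)
  have a4 : Real.cos t*(B*t^9) ≤ (1 - t^2/2 + t^4/24 - t^6/720 + t^8/40320 - t^10/3628800 + t^12/479001600)*((12099400:ℝ)/10^10*t^9) :=
    mul_le_mul hc12 (mul_le_mul_of_nonneg_right hBup (by positivity))
      (mul_nonneg (by linarith) (by positivity)) hK12nn
  have a5 : Real.cos t*(8/45*t^5) ≤ (1 - t^2/2 + t^4/24 - t^6/720 + t^8/40320 - t^10/3628800 + t^12/479001600)*(8/45*t^5) :=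
    mul_le_mul_of_nonneg_right hc12 (by positivity)
  have a6 : (1 - t^2/2 + t^4/24 - t^6/720 + t^8/40320 - t^10/3628800)*(8/945*t^7 + t) ≤ Real.cos t*(8/945*t^7 + t) :=
    mul_le_mul_of_nonneg_right hc10 (by positivity)
  have a7 : Real.sin t*(9*B*t^8) ≤ (t - t^3/6 + t^5/120 - t^7/5040 + t^9/362880)*(9*((12099400:ℝ)/10^10)*t^8) := by
    apply mul_le_mul hs9 ?_ (by nlinarith [pow_nonneg ht0.le 8]) hS9nn
    nlinarith [pow_nonneg ht0.le 8]
  have a8 : Real.sin t*(8/9*t^4) ≤ (t - t^3/6 + t^5/120 - t^7/5040 + t^9/362880)*(8/9*t^4) :=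
    mul_le_mul_of_nonneg_right hs9 (by positivity)
  have a9 : (t - t^3/6 + t^5/120 - t^7/5040 + t^9/362880 - t^11/39916800)*(8/135*t^6+1) ≤ Real.sin t*(8/135*t^6+1) :=
    mul_le_mul_of_nonneg_right hs11 (by positivity)
  have hcore := PDp_neg (t - 73/50) (by linarith) (by linarith)
  unfold DD'
  linarith [hsq2, hs93, hs11, a1, a3, a4, a5, a6, a7, a8, a9, hcore]

set_option maxHeartbeats 2000000 in
theorem stmt_15 (x : ℝ) (h1 : 0 < x) (h2 : x < π / 2) :
    2 + (8 / 45 - (8 / 945) * x ^ 2 + (16 / 14175) * x ^ 4) * x ^ 3 * tan x <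
      (sin x / x) ^ 2 + tan x / x ∧
    (sin x / x) ^ 2 + tan x / x <
      2 + (8 / 45 - (8 / 945) * x ^ 2 +
        ((241920 - 2688 * π ^ 4 + 32 * π ^ 6) / (945 * π ^ 8)) * x ^ 4) * x ^ 3 * tan x := by
  have hpipos := Real.pi_pos
  have hc : 0 < Real.cos x := Real.cos_pos_of_mem_Ioo ⟨by linarith, h2⟩
  have hx0 : x ≠ 0 := ne_of_gt h1
  have hc0 : Real.cos x ≠ 0 := ne_of_gt hc
  rw [Real.tan_eq_sin_div_cos]
  constructor
  · have key := F_pos x h1 h2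
    have hiden : (Real.sin x / x)^2 + Real.sin x/Real.cos x/x -
        (2 + (8/45 - (8/945)*x^2 + (16/14175)*x^4)*x^3*(Real.sin x/Real.cos x)) =
        (Real.sin x^2*Real.cos x + x*Real.sin x -
          (2*x^2*Real.cos x + (8/45*x^5 - 8/945*x^7 + 16/14175*x^9)*Real.sin x))/(x^2*Real.cos x) := by
      field_simp
    have hpos := div_pos (by linarith : (0:ℝ) < Real.sin x^2*Real.cos x + x*Real.sin x -
          (2*x^2*Real.cos x + (8/45*x^5 - 8/945*x^7 + 16/14175*x^9)*Real.sin x))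
      (by positivity : (0:ℝ) < x^2*Real.cos x)
    linarith [hiden, hpos]
  · have hBlo := b_lo_bound
    have hBup := b_up_bound
    have hDpos : 0 < DD ((241920 - 2688 * π ^ 4 + 32 * π ^ 6) / (945 * π ^ 8)) x := by
      rcases le_or_gt x (73/50) with hx | hx
      · exact DD_posA _ hBlo x h1 hx
      · have hanti : StrictAntiOn (DD ((241920 - 2688 * π ^ 4 + 32 * π ^ 6) / (945 * π ^ 8)))
            (Set.Icc (73/50) (π/2)) := by
          apply strictAntiOn_of_deriv_neg (convex_Icc _ _)
          · apply Continuous.continuousOn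
            unfold DD
            fun_prop
          · intro t ht
            rw [interior_Icc] at ht
            rw [(DD_hasDeriv _ t).deriv]
            exact DD'_neg _ hBlo hBup t ht.1.le ht.2.le
        have hmem1 : x ∈ Set.Icc (73/50:ℝ) (π/2) := ⟨hx.le, h2.le⟩
        have hmem2 : (π/2:ℝ) ∈ Set.Icc (73/50:ℝ) (π/2) := by
          constructor
          · have := Real.pi_gt_d6; linarith
          · exact le_refl _
        have hlt := hanti hmem1 hmem2 h2
        rw [DD_pi2] at hlt
        exact hlt
    have hiden : (2 + (8/45 - (8/945)*x^2 +
        ((241920 - 2688 * π ^ 4 + 32 * π ^ 6) / (945 * π ^ 8))*x^4)*x^3*(Real.sin x/Real.cos x)) -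
        ((Real.sin x / x)^2 + Real.sin x/Real.cos x/x) =
        DD ((241920 - 2688 * π ^ 4 + 32 * π ^ 6) / (945 * π ^ 8)) x / (x^2*Real.cos x) := by
      have hpi := Real.pi_ne_zero
      unfold DD
      field_simp
      ring
    linarith [hiden, div_pos hDpos (by positivity : (0:ℝ) < x^2*Real.cos x)]
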